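/- arXiv:1312.2166 — 3 statements merged into one kernel-verified Lean document; each statement's English description precedes it below -/
import Mathlib

section
/- Let M > 1 be real and let α be a nonnegative, continuous log-concave function on (0, M), extended by zero outside (0, M). Then for every real n with -2 < n < 2M - 2, ∫ α(s)·α(n-s+1)·C(M-1, s)·C(M-1, n-s) ds ≤ ∫ α(s)·α(n-s+1)·C(M, s)·C(M-2, n-s) ds, where both integrals range over all s with 0 ≤ s ≤ M and 0 ≤ n + 1 - s ≤ M. -/
open Real MeasureTheory Set

/-- Generalized binomial coefficient `C(M,s) = Γ(M+1)/(Γ(s+1)·Γ(M-s+1))`. -/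
noncomputable def genBinom (M s : ℝ) : ℝ :=
  Real.Gamma (M + 1) / (Real.Gamma (s + 1) * Real.Gamma (M - s + 1))

/-- A nonnegative function is log-concave on a set if
`f (λx + (1-λ)y) ≥ f x ^ λ * f y ^ (1-λ)` for all `x, y` in the set and `0 < λ < 1`. -/
def IsLogConcaveOn (S : Set ℝ) (f : ℝ → ℝ) : Prop :=
  ∀ x ∈ S, ∀ y ∈ S, ∀ l : ℝ, 0 < l → l < 1 →
    f x ^ l * f y ^ (1 - l) ≤ f (l * x + (1 - l) * y)

lemma invGamma_eq_re (x : ℝ) : (Real.Gamma x)⁻¹ = ((Complex.Gamma (x : ℂ))⁻¹).re := by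
  rw [Complex.Gamma_ofReal, ← Complex.ofReal_inv, Complex.ofReal_re]

lemma invGamma_continuous : Continuous (fun x : ℝ => (Real.Gamma x)⁻¹) := by
  have h : (fun x : ℝ => (Real.Gamma x)⁻¹)
      = Complex.re ∘ (fun z : ℂ => (Complex.Gamma z)⁻¹) ∘ (fun x : ℝ => (x : ℂ)) := by
    funext x; exact invGamma_eq_re x
  rw [h]
  exact Complex.continuous_re.comp
    ((Complex.differentiable_one_div_Gamma.continuous).comp Complex.continuous_ofReal)

lemma invGamma_shift (x : ℝ) : (Real.Gamma x)⁻¹ = x * (Real.Gamma (x + 1))⁻¹ := by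
  by_cases hx : x = 0
  · simp [hx, Real.Gamma_zero]
  · rw [Real.Gamma_add_one hx, mul_inv]
    by_cases hG : Real.Gamma x = 0
    · simp [hG]
    · field_simp

lemma invGamma_nonneg {x : ℝ} (hx : 0 ≤ x) : 0 ≤ (Real.Gamma x)⁻¹ := by
  rcases eq_or_lt_of_le hx with h | h
  · simp [← h, Real.Gamma_zero]
  · exact le_of_lt (inv_pos.mpr (Real.Gamma_pos_of_pos h))

lemma invGamma_nonpos {x : ℝ} (h1 : -1 ≤ x) (h2 : x ≤ 0) : (Real.Gamma x)⁻¹ ≤ 0 := by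
  rw [invGamma_shift x]
  exact mul_nonpos_of_nonpos_of_nonneg h2 (invGamma_nonneg (by linarith))

/-- the function `g(s) = C(M-1,s) C(M-2,n-1-s)` written with inverses. -/
noncomputable def gg (M n s : ℝ) : ℝ :=
  Real.Gamma M * Real.Gamma (M - 1) *
    ((Real.Gamma (s + 1))⁻¹ * (Real.Gamma (M - s))⁻¹ *
      (Real.Gamma (n - s))⁻¹ * (Real.Gamma (M - n + s))⁻¹)

noncomputable def Wb (M n s : ℝ) : ℝ :=
  genBinom M s * genBinom (M - 2) (n - s) - genBinom (M - 1) s * genBinom (M - 1) (n - s)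

noncomputable def KK (M n s : ℝ) : ℝ :=
  Real.Gamma (M - 1) * Real.Gamma (M - 1) * (M - 1) / 2 *
    ((Real.Gamma (s + 1))⁻¹ * (Real.Gamma (n - s + 2))⁻¹ *
      (Real.Gamma (M - s + 1))⁻¹ * (Real.Gamma (M - n + s))⁻¹)

noncomputable def BB (M n s : ℝ) : ℝ := (4 * M - 2) * s * (n + 1 - s) - M * n * (n + 1)

lemma invGamma_comp_continuous {f : ℝ → ℝ} (hf : Continuous f) :
    Continuous (fun s => (Real.Gamma (f s))⁻¹) :=
  invGamma_continuous.comp hf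

lemma gg_continuous (M n : ℝ) : Continuous (gg M n) := by
  unfold gg
  exact continuous_const.mul
    (((invGamma_comp_continuous (by continuity)).mul
        (invGamma_comp_continuous (by continuity))).mul
      (invGamma_comp_continuous (by continuity)) |>.mul
      (invGamma_comp_continuous (by continuity)))

lemma gamma_M_eq {M : ℝ} (hM : 1 < M) : Real.Gamma M = (M - 1) * Real.Gamma (M - 1) := by
  have h := Real.Gamma_add_one (show M - 1 ≠ 0 by intro h; rw [sub_eq_zero] at h; linarith)
  rwa [show M - 1 + 1 = M by ring] at h

lemma gamma_M1_eq {M : ℝ} (hM : 1 < M) :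
    Real.Gamma (M + 1) = M * ((M - 1) * Real.Gamma (M - 1)) := by
  rw [Real.Gamma_add_one (by positivity : (M:ℝ) ≠ 0), gamma_M_eq hM]

/-- telescoping identity `W(s) = g(s-1) - g(s)`. -/
lemma Wb_eq_gg {M : ℝ} (hM : 1 < M) (n s : ℝ) : Wb M n s = gg M n (s - 1) - gg M n s := by
  unfold Wb gg genBinom
  rw [show M - 2 + 1 = M - 1 by ring, show M - 1 + 1 = M by ring,
    show M - 1 - s + 1 = M - s by ring, show M - 1 - (n - s) + 1 = M - n + s by ring,
    show M - 2 - (n - s) + 1 = M - n + s - 1 by ring,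
    show s - 1 + 1 = s by ring, show M - (s - 1) = M - s + 1 by ring,
    show n - (s - 1) = n - s + 1 by ring, show M - n + (s - 1) = M - n + s - 1 by ring]
  rw [gamma_M1_eq hM, gamma_M_eq hM]
  simp only [div_eq_mul_inv, mul_inv]
  rw [invGamma_shift (M - s), show M - s + 1 = M - s + 1 from rfl]
  rw [invGamma_shift (n - s)]
  rw [invGamma_shift (M - n + s - 1), show M - n + s - 1 + 1 = M - n + s by ring]
  rw [invGamma_shift s]
  ring

/-- symmetrization identity `W(s) + W(n+1-s) = 2 K(s) B(s)`. -/
lemma Wb_add_reflect {M : ℝ} (hM : 1 < M) (n s : ℝ) :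
    Wb M n s + Wb M n (n + 1 - s) = 2 * (KK M n s * BB M n s) := by
  unfold Wb KK BB genBinom
  rw [show M - 2 + 1 = M - 1 by ring, show M - 1 + 1 = M by ring,
    show M - 1 - s + 1 = M - s by ring, show M - 1 - (n - s) + 1 = M - n + s by ring,
    show M - 2 - (n - s) + 1 = M - n + s - 1 by ring,
    show n + 1 - s + 1 = n - s + 2 by ring, show M - (n + 1 - s) + 1 = M - n + s by ring,
    show n - (n + 1 - s) = s - 1 by ring, show s - 1 + 1 = s by ring,
    show M - 2 - (s - 1) + 1 = M - s by ring,
    show M - 1 - (n + 1 - s) + 1 = M - n + s - 1 by ring,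
    show M - 1 - (s - 1) + 1 = M - s + 1 by ring]
  rw [gamma_M1_eq hM, gamma_M_eq hM]
  simp only [div_eq_mul_inv, mul_inv]
  rw [invGamma_shift (M - s)]
  rw [invGamma_shift (n - s + 1), show n - s + 1 + 1 = n - s + 2 by ring]
  rw [invGamma_shift (M - n + s - 1), show M - n + s - 1 + 1 = M - n + s by ring]
  rw [invGamma_shift s]
  ring

/-- reflection difference formula for gg. -/
lemma gg_sub_reflect (M n s : ℝ) :
    gg M n s - gg M n (n - s) =
      Real.Gamma M * Real.Gamma (M - 1) *
        ((Real.Gamma (s + 1))⁻¹ * (Real.Gamma (n - s + 1))⁻¹ *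
          (Real.Gamma (M - s))⁻¹ * (Real.Gamma (M - n + s))⁻¹) * (n - 2 * s) := by
  unfold gg
  rw [show n - (n - s) = s by ring, show M - (n - s) = M - n + s by ring,
    show n - s + 1 = n - s + 1 from rfl, show M - n + (n - s) = M - s by ring]
  rw [invGamma_shift (n - s)]
  rw [invGamma_shift s]
  ring

lemma strip_ineq {M n : ℝ} (hM : 1 < M) (hn1 : 0 < n + 1) (hn2 : n < 2 * M - 2) :
    0 ≤ ∫ s in (max 0 (n + 1 - M))..(min M (n + 1)), Wb M n s := by
  set a := max 0 (n + 1 - M) with ha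
  set b := min M (n + 1) with hb
  have hsum : a + b = n + 1 := by
    rcases le_total (n + 1) M with h | h
    · rw [ha, hb, max_eq_left (by linarith), min_eq_right h]; ring
    · rw [ha, hb, max_eq_right (by linarith), min_eq_left h]; ring
  have ha0 : 0 ≤ a := le_max_left _ _
  have haM : a - 1 ≥ n - M := by
    have := le_max_right (0 : ℝ) (n + 1 - M); rw [← ha] at this; linarith
  have hbM : b ≤ M := min_le_left _ _
  have hab : a < b := by
    rcases le_total (n + 1) M with h | h
    · rw [ha, hb, max_eq_left (by linarith), min_eq_right h]; linarith
    · rw [ha, hb, max_eq_right (by linarith), min_eq_left h]; linarith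
  have hΓM : 0 < Real.Gamma M := Real.Gamma_pos_of_pos (by linarith)
  have hΓM1 : 0 < Real.Gamma (M - 1) := Real.Gamma_pos_of_pos (by linarith)
  have hgi : ∀ u v : ℝ, IntervalIntegrable (gg M n) volume u v := fun u v =>
    (gg_continuous M n).intervalIntegrable u v
  have hgi' : ∀ u v : ℝ, IntervalIntegrable (fun s => gg M n (s - 1)) volume u v := fun u v =>
    (((gg_continuous M n).comp (continuous_id.sub continuous_const))).intervalIntegrable u v
  have hgir : ∀ u v : ℝ, IntervalIntegrable (fun s => gg M n (n - s)) volume u v := fun u v =>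
    (((gg_continuous M n).comp (continuous_const.sub continuous_id))).intervalIntegrable u v
  have chasles : ∀ u v w : ℝ,
      (∫ s in u..v, gg M n s) + ∫ s in v..w, gg M n s = ∫ s in u..w, gg M n s :=
    fun u v w => intervalIntegral.integral_add_adjacent_intervals (hgi u v) (hgi v w)
  have h1 : (∫ s in a..b, Wb M n s)
      = (∫ s in a..b, gg M n (s - 1)) - ∫ s in a..b, gg M n s := by
    rw [← intervalIntegral.integral_sub (hgi' a b) (hgi a b)]
    apply intervalIntegral.integral_congr
    intro s _
    exact Wb_eq_gg hM n s
  have h2 : (∫ s in a..b, gg M n (s - 1)) = ∫ s in (a - 1)..(b - 1), gg M n s :=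
    intervalIntegral.integral_comp_sub_right (gg M n) 1
  have h3 : (∫ s in (a - 1)..(b - 1), gg M n s) - (∫ s in a..b, gg M n s)
      = (∫ s in (a - 1)..a, gg M n s) - ∫ s in (b - 1)..b, gg M n s := by
    have e1 := chasles (a - 1) a (b - 1)
    have e2 := chasles a (b - 1) b
    linarith
  rw [h1, h2, h3]
  rcases lt_or_ge n 0 with hneg | hpos
  · -- case -1 < n < 0 : a = 0, b = n+1
    have haa : a = 0 := by rw [ha]; exact max_eq_left (by linarith)
    have hbb : b = n + 1 := by rw [hb]; exact min_eq_right (by linarith)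
    have e1 := chasles (a - 1) n a
    have e2 := chasles (b - 1) a b
    have p1 : 0 ≤ ∫ s in (a - 1)..n, gg M n s := by
      apply intervalIntegral.integral_nonneg (by rw [haa]; linarith)
      intro u hu
      obtain ⟨hu1, hu2⟩ := hu
      rw [haa] at hu1
      unfold gg
      have i1 : 0 ≤ (Real.Gamma (u + 1))⁻¹ := invGamma_nonneg (by linarith)
      have i2 : 0 ≤ (Real.Gamma (M - u))⁻¹ := invGamma_nonneg (by linarith)
      have i3 : 0 ≤ (Real.Gamma (n - u))⁻¹ := invGamma_nonneg (by linarith)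
      have i4 : 0 ≤ (Real.Gamma (M - n + u))⁻¹ := invGamma_nonneg (by linarith)
      positivity
    have p2 : (∫ s in a..b, gg M n s) ≤ 0 := by
      have p2' : 0 ≤ ∫ s in a..b, -gg M n s := by
        apply intervalIntegral.integral_nonneg (by linarith)
        intro u hu
        rw [neg_nonneg]
        obtain ⟨hu1, hu2⟩ := hu
        rw [haa] at hu1; rw [hbb] at hu2
        unfold gg
        have i1 : 0 ≤ (Real.Gamma (u + 1))⁻¹ := invGamma_nonneg (by linarith)
        have i2 : 0 ≤ (Real.Gamma (M - u))⁻¹ := invGamma_nonneg (by linarith)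
        have i3 : (Real.Gamma (n - u))⁻¹ ≤ 0 := invGamma_nonpos (by linarith) (by linarith)
        have i4 : 0 ≤ (Real.Gamma (M - n + u))⁻¹ := invGamma_nonneg (by linarith)
        have : (Real.Gamma (u + 1))⁻¹ * (Real.Gamma (M - u))⁻¹ * (Real.Gamma (n - u))⁻¹
            * (Real.Gamma (M - n + u))⁻¹ ≤ 0 :=
          mul_nonpos_of_nonpos_of_nonneg
            (mul_nonpos_of_nonneg_of_nonpos (mul_nonneg i1 i2) i3) i4
        exact mul_nonpos_of_nonneg_of_nonpos (by positivity) this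
      rw [intervalIntegral.integral_neg] at p2'
      linarith
    -- goal : 0 ≤ ∫_{a-1..a} gg - ∫_{b-1..b} gg
    -- note b - 1 = n and use e1 : ∫_{a-1..n} + ∫_{n..a} = ∫_{a-1..a} ;
    -- e2 : ∫_{b-1..a} + ∫_{a..b} = ∫_{b-1..b} with b-1 = n
    have hbn : b - 1 = n := by rw [hbb]; ring
    rw [hbn] at e2 ⊢
    linarith
  · -- case n ≥ 0 : unified reflection argument
    have hrefl : (∫ s in (b - 1)..b, gg M n s) = ∫ s in (a - 1)..a, gg M n (n - s) := by
      rw [intervalIntegral.integral_comp_sub_left (gg M n) n,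
        show n - a = b - 1 by linarith, show n - (a - 1) = b by linarith]
    rw [hrefl, ← intervalIntegral.integral_sub (hgi _ _) (hgir _ _)]
    apply intervalIntegral.integral_nonneg (by linarith)
    intro u hu
    obtain ⟨hu1, hu2⟩ := hu
    rw [gg_sub_reflect]
    have i1 : 0 ≤ (Real.Gamma (u + 1))⁻¹ := invGamma_nonneg (by linarith)
    have i2 : 0 ≤ (Real.Gamma (n - u + 1))⁻¹ := invGamma_nonneg (by nlinarith)
    have i3 : 0 ≤ (Real.Gamma (M - u))⁻¹ := invGamma_nonneg (by linarith)
    have i4 : 0 ≤ (Real.Gamma (M - n + u))⁻¹ := invGamma_nonneg (by linarith)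
    have i5 : 0 ≤ n - 2 * u := by
      rcases max_cases (0 : ℝ) (n + 1 - M) with ⟨h, h'⟩ | ⟨h, h'⟩ <;> rw [← ha] at h <;>
        rw [h] at hu2 <;> linarith
    positivity

lemma alpha_bound {M : ℝ} (hM : 1 < M) {α : ℝ → ℝ} (hnn : ∀ s, 0 ≤ α s)
    (hcont : ContinuousOn α (Ioo 0 M)) (hlc : IsLogConcaveOn (Ioo 0 M) α)
    (hz : ∀ s, s ∉ Ioo 0 M → α s = 0) : ∃ C : ℝ, 0 ≤ C ∧ ∀ x, α x ≤ C := by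
  by_cases hex : ∃ m ∈ Ioo (0:ℝ) M, 0 < α m
  · obtain ⟨m, hm, hαm⟩ := hex
    obtain ⟨hm1, hm2⟩ := hm
    have hKsub : Icc (m/2) ((M+m)/2) ⊆ Ioo 0 M := by
      intro w hw
      obtain ⟨hw1, hw2⟩ := hw
      exact ⟨by linarith, by linarith⟩
    obtain ⟨z, hzK, hmax⟩ := isCompact_Icc.exists_isMaxOn
      ⟨m/2, left_mem_Icc.mpr (by linarith)⟩ (hcont.mono hKsub)
    refine ⟨α z * α z / α m, div_nonneg (mul_nonneg (hnn z) (hnn z)) (le_of_lt hαm), fun x => ?_⟩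
    by_cases hx : x ∈ Ioo (0:ℝ) M
    · obtain ⟨hx1, hx2⟩ := hx
      by_cases hαx : α x = 0
      · rw [hαx]; exact div_nonneg (mul_nonneg (hnn z) (hnn z)) (le_of_lt hαm)
      have hαx' : 0 < α x := (hnn x).lt_of_ne (Ne.symm hαx)
      have h1 := hlc x ⟨hx1, hx2⟩ m ⟨hm1, hm2⟩ (1/2) (by norm_num) (by norm_num)
      rw [show (1:ℝ) - 1/2 = 1/2 by norm_num] at h1
      have hmidz : α (1/2 * x + 1/2 * m) ≤ α z := hmax ⟨by linarith, by linarith⟩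
      have key : α x * α m ≤ α z * α z := by
        have e : α x ^ (1/2:ℝ) * α m ^ (1/2:ℝ) * (α x ^ (1/2:ℝ) * α m ^ (1/2:ℝ))
            = α x * α m := by
          rw [mul_mul_mul_comm, ← Real.rpow_add hαx', ← Real.rpow_add hαm]; norm_num
        calc α x * α m = _ := e.symm
          _ ≤ α (1/2 * x + 1/2 * m) * α (1/2 * x + 1/2 * m) :=
              mul_le_mul h1 h1 (by positivity) (hnn _)
          _ ≤ α z * α z := mul_le_mul hmidz hmidz (hnn _) (hnn z)
      exact (le_div_iff₀ hαm).mpr key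
    · rw [hz x hx]
      exact div_nonneg (mul_nonneg (hnn z) (hnn z)) (le_of_lt hαm)
  · push_neg at hex
    refine ⟨0, le_refl 0, fun x => ?_⟩
    by_cases hx : x ∈ Ioo (0:ℝ) M
    · exact hex x hx
    · rw [hz x hx]

lemma phi_mono {M : ℝ} (hM : 1 < M) {α : ℝ → ℝ} (hnn : ∀ s, 0 ≤ α s)
    (hlc : IsLogConcaveOn (Ioo 0 M) α) (hz : ∀ s, s ∉ Ioo 0 M → α s = 0)
    (n : ℝ) {x y : ℝ} (hcx : (n + 1) / 2 ≤ x) (hxy : x ≤ y) :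
    α y * α (n - y + 1) ≤ α x * α (n - x + 1) := by
  by_cases hy0' : α y * α (n - y + 1) ≤ 0
  · exact le_trans hy0' (mul_nonneg (hnn x) (hnn _))
  push_neg at hy0'
  have hαy : 0 < α y := by
    rcases (hnn y).lt_or_eq with h | h
    · exact h
    · exfalso; rw [← h, zero_mul] at hy0'; exact lt_irrefl 0 hy0'
  have hαt : 0 < α (n - y + 1) := by
    rcases (hnn (n - y + 1)).lt_or_eq with h | h
    · exact h
    · exfalso; rw [← h, mul_zero] at hy0'; exact lt_irrefl 0 hy0'
  have hymem : y ∈ Ioo (0:ℝ) M := by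
    by_contra h; rw [hz y h] at hαy; exact lt_irrefl 0 hαy
  have htmem : (n - y + 1) ∈ Ioo (0:ℝ) M := by
    by_contra h; rw [hz _ h] at hαt; exact lt_irrefl 0 hαt
  obtain ⟨hy1, hy2⟩ := hymem
  obtain ⟨ht1, ht2⟩ := htmem
  have hcmem : (n + 1) / 2 ∈ Ioo (0:ℝ) M := ⟨by linarith, by linarith⟩
  have h1 := hlc y ⟨hy1, hy2⟩ (n - y + 1) ⟨ht1, ht2⟩ (1/2) (by norm_num) (by norm_num)
  rw [show (1:ℝ) - 1/2 = 1/2 by norm_num,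
    show 1/2 * y + 1/2 * (n - y + 1) = (n + 1) / 2 by ring] at h1
  have hsq : α y * α (n - y + 1) ≤ α ((n+1)/2) * α ((n+1)/2) := by
    have e : α y ^ (1/2:ℝ) * α (n - y + 1) ^ (1/2:ℝ)
        * (α y ^ (1/2:ℝ) * α (n - y + 1) ^ (1/2:ℝ)) = α y * α (n - y + 1) := by
      rw [mul_mul_mul_comm, ← Real.rpow_add hαy, ← Real.rpow_add hαt]; norm_num
    calc α y * α (n - y + 1) = _ := e.symm
      _ ≤ α ((n+1)/2) * α ((n+1)/2) := mul_le_mul h1 h1 (by positivity) (hnn _)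
  rcases eq_or_lt_of_le hxy with hxy' | hxy'
  · rw [hxy']
  rcases eq_or_lt_of_le hcx with hcx' | hcx'
  · rw [← hcx', show n - (n+1)/2 + 1 = (n+1)/2 by ring]
    exact hsq
  -- now (n+1)/2 < x < y
  set l := (y - x) / (y - (n+1)/2) with hl
  have hyc : (0:ℝ) < y - (n+1)/2 := by linarith
  have hl0 : 0 < l := div_pos (by linarith) hyc
  have hl1 : l < 1 := (div_lt_one hyc).mpr (by linarith)
  have hld : l * (y - (n+1)/2) = y - x := div_mul_cancel₀ (y - x) (ne_of_gt hyc)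
  have hx_comb : l * ((n+1)/2) + (1 - l) * y = x := by
    have e : l * ((n+1)/2) + (1 - l) * y = y - l * (y - (n+1)/2) := by ring
    rw [e, hld]; ring
  have ht_comb : l * ((n+1)/2) + (1 - l) * (n - y + 1) = n - x + 1 := by
    have e : l * ((n+1)/2) + (1 - l) * (n - y + 1)
        = (n + 1) - (l * ((n+1)/2) + (1 - l) * y) := by ring
    rw [e, hx_comb]; ring
  have h2 := hlc ((n+1)/2) hcmem y ⟨hy1, hy2⟩ l hl0 hl1
  rw [hx_comb] at h2
  have h3 := hlc ((n+1)/2) hcmem (n - y + 1) ⟨ht1, ht2⟩ l hl0 hl1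
  rw [ht_comb] at h3
  calc α y * α (n - y + 1)
      = (α y * α (n - y + 1)) ^ ((l : ℝ) + (1 - l)) := by
        rw [show l + (1 - l) = (1:ℝ) by ring, Real.rpow_one]
    _ = (α y * α (n - y + 1)) ^ l * (α y * α (n - y + 1)) ^ (1 - l) :=
        Real.rpow_add hy0' _ _
    _ ≤ (α ((n+1)/2) * α ((n+1)/2)) ^ l * (α y * α (n - y + 1)) ^ (1 - l) :=
        mul_le_mul_of_nonneg_right
          (Real.rpow_le_rpow (le_of_lt hy0') hsq (le_of_lt hl0))
          (Real.rpow_nonneg (le_of_lt hy0') _)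
    _ = (α ((n+1)/2) ^ l * α y ^ (1 - l)) * (α ((n+1)/2) ^ l * α (n - y + 1) ^ (1 - l)) := by
        rw [Real.mul_rpow (hnn _) (hnn _), Real.mul_rpow (hnn _) (hnn _)]; ring
    _ ≤ α x * α (n - x + 1) := by
        exact mul_le_mul h2 h3
          (mul_nonneg (Real.rpow_nonneg (hnn _) _) (Real.rpow_nonneg (hnn _) _)) (hnn x)

/-- `F1` written with inverses. -/
lemma F1_eq (M n s : ℝ) : genBinom (M - 1) s * genBinom (M - 1) (n - s) =
    Real.Gamma M * Real.Gamma M * ((Real.Gamma (s + 1))⁻¹ * (Real.Gamma (M - s))⁻¹ *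
      (Real.Gamma (n - s + 1))⁻¹ * (Real.Gamma (M - n + s))⁻¹) := by
  unfold genBinom
  rw [show M - 1 + 1 = M by ring, show M - 1 - s + 1 = M - s by ring,
    show M - 1 - (n - s) + 1 = M - n + s by ring]
  simp only [div_eq_mul_inv, mul_inv]
  ring

lemma F2_eq (M n s : ℝ) : genBinom M s * genBinom (M - 2) (n - s) =
    Real.Gamma (M + 1) * Real.Gamma (M - 1) * ((Real.Gamma (s + 1))⁻¹ *
      (Real.Gamma (M - s + 1))⁻¹ * (Real.Gamma (n - s + 1))⁻¹ *
      (Real.Gamma (M - n + s - 1))⁻¹) := by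
  unfold genBinom
  rw [show M - 2 + 1 = M - 1 by ring, show M - 2 - (n - s) + 1 = M - n + s - 1 by ring]
  simp only [div_eq_mul_inv, mul_inv]
  ring

set_option maxHeartbeats 2000000 in
theorem mixture_integral_ineq_two
    (M : ℝ) (hM : 1 < M) (α : ℝ → ℝ)
    (hα_nonneg : ∀ s, 0 ≤ α s)
    (hα_cont : ContinuousOn α (Set.Ioo (0 : ℝ) M))
    (hα_logconcave : IsLogConcaveOn (Set.Ioo (0 : ℝ) M) α)
    (hα_zero : ∀ s, s ∉ Set.Ioo (0 : ℝ) M → α s = 0)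
    (n : ℝ) (hn₁ : -2 < n) (hn₂ : n < 2 * M - 2) :
    (∫ s in {s : ℝ | 0 ≤ s ∧ s ≤ M ∧ 0 ≤ n + 1 - s ∧ n + 1 - s ≤ M},
        α s * α (n - s + 1) * genBinom (M - 1) s * genBinom (M - 1) (n - s)) ≤
      ∫ s in {s : ℝ | 0 ≤ s ∧ s ≤ M ∧ 0 ≤ n + 1 - s ∧ n + 1 - s ≤ M},
        α s * α (n - s + 1) * genBinom M s * genBinom (M - 2) (n - s) := by
  have hset : {s : ℝ | 0 ≤ s ∧ s ≤ M ∧ 0 ≤ n + 1 - s ∧ n + 1 - s ≤ M}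
      = Icc (max 0 (n + 1 - M)) (min M (n + 1)) := by
    ext s
    simp only [mem_setOf_eq, mem_Icc, max_le_iff, le_min_iff]
    constructor
    · rintro ⟨h1, h2, h3, h4⟩; exact ⟨⟨h1, by linarith⟩, h2, by linarith⟩
    · rintro ⟨⟨h1, h2⟩, h3, h4⟩; exact ⟨h1, h3, by linarith, by linarith⟩
  rw [hset]
  set a : ℝ := max 0 (n + 1 - M) with ha
  set b : ℝ := min M (n + 1) with hb
  by_cases hn0 : n + 1 ≤ 0
  · -- degenerate : measure-zero domain
    have haa : a = 0 := max_eq_left (by linarith)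
    have hbb : b = n + 1 := min_eq_right (by linarith)
    have h0 : volume.restrict (Icc a b) = 0 := by
      rw [Measure.restrict_eq_zero, Real.volume_Icc, haa, hbb,
        ENNReal.ofReal_eq_zero]
      linarith
    simp only [h0, integral_zero_measure, le_refl]
  push_neg at hn0
  have hsum : a + b = n + 1 := by
    rcases le_total (n + 1) M with h | h
    · rw [ha, hb, max_eq_left (by linarith), min_eq_right h]; ring
    · rw [ha, hb, max_eq_right (by linarith), min_eq_left h]; ring
  have ha0 : 0 ≤ a := le_max_left _ _
  have hbM : b ≤ M := min_le_left _ _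
  have haM : n + 1 - M ≤ a := le_max_right _ _
  have hab : a < b := by
    rcases le_total (n + 1) M with h | h
    · rw [ha, hb, max_eq_left (by linarith), min_eq_right h]; linarith
    · rw [ha, hb, max_eq_right (by linarith), min_eq_left h]; linarith
  -- convert to interval integrals
  have hIcc : ∀ f : ℝ → ℝ, (∫ s in Icc a b, f s) = ∫ s in a..b, f s := fun f => by
    rw [MeasureTheory.integral_Icc_eq_integral_Ioc,
      ← intervalIntegral.integral_of_le (le_of_lt hab)]
  rw [hIcc, hIcc]
  -- the weight φ
  set φ : ℝ → ℝ := fun s => α s * α (n - s + 1) with hφ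
  have hφ_nonneg : ∀ s, 0 ≤ φ s := fun s => mul_nonneg (hα_nonneg s) (hα_nonneg _)
  have hφsym : ∀ s, φ (n + 1 - s) = φ s := by
    intro s
    show α (n + 1 - s) * α (n - (n + 1 - s) + 1) = α s * α (n - s + 1)
    rw [show n - (n + 1 - s) + 1 = s by ring, show n + 1 - s = n - s + 1 by ring, mul_comm]
  -- measurability of φ
  have hα_asm : AEStronglyMeasurable α volume := by
    have h1 : α = (Ioo (0:ℝ) M).indicator α := by
      funext x
      by_cases hx : x ∈ Ioo (0:ℝ) M
      · rw [indicator_of_mem hx]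
      · rw [indicator_of_notMem hx, hα_zero x hx]
    rw [h1]
    exact (aestronglyMeasurable_indicator_iff measurableSet_Ioo).mpr
      (hα_cont.aestronglyMeasurable measurableSet_Ioo)
  have hφ_asm : AEStronglyMeasurable φ volume := by
    apply hα_asm.mul
    have hmp : MeasurePreserving (fun x : ℝ => (n + 1) - x) volume volume :=
      Measure.measurePreserving_sub_left volume (n + 1)
    have := hα_asm.comp_measurePreserving hmp
    have heq : (α ∘ fun x : ℝ => (n + 1) - x) = fun s => α (n - s + 1) := by
      funext x; simp only [Function.comp_apply]; rw [show n + 1 - x = n - x + 1 by ring]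
    rwa [heq] at this
  -- bound on α and φ
  obtain ⟨Cα, hCα0, hCα⟩ := alpha_bound hM hα_nonneg hα_cont hα_logconcave hα_zero
  have hφ_bd : ∀ s, ‖φ s‖ ≤ Cα * Cα := by
    intro s
    rw [Real.norm_eq_abs, abs_of_nonneg (hφ_nonneg s)]
    exact mul_le_mul (hCα s) (hCα _) (hα_nonneg _) hCα0
  -- generic integrability of φ times a continuous function
  have hIG : ∀ F : ℝ → ℝ, Continuous F →
      IntervalIntegrable (fun s => φ s * F s) volume a b := by
    intro F hF
    rw [intervalIntegrable_iff]
    obtain ⟨CF, hCF⟩ := (isCompact_uIcc (a := a) (b := b)).exists_bound_of_continuousOn hF.continuousOn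
    apply Integrable.mono' (g := fun _ => Cα * Cα * |CF|)
    · exact (integrableOn_const_iff).mpr (Or.inr measure_Ioc_lt_top)
    · exact ((hφ_asm.mul hF.aestronglyMeasurable).restrict)
    · apply (ae_restrict_iff' measurableSet_uIoc).mpr
      apply Filter.Eventually.of_forall
      intro x hx
      rw [norm_mul]
      apply mul_le_mul (hφ_bd x) _ (norm_nonneg _) (by positivity)
      exact le_trans (hCF x (uIoc_subset_uIcc hx)) (le_abs_self CF)
  -- continuity helpers
  have hcont1 : Continuous (fun s : ℝ => s + 1) := continuous_id.add continuous_const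
  have hcont2 : Continuous (fun s : ℝ => M - s) := continuous_const.sub continuous_id
  have hcont3 : Continuous (fun s : ℝ => n - s + 1) :=
    (continuous_const.sub continuous_id).add continuous_const
  have hcont4 : Continuous (fun s : ℝ => M - n + s) := continuous_const.add continuous_id
  have hcont5 : Continuous (fun s : ℝ => M - s + 1) :=
    (continuous_const.sub continuous_id).add continuous_const
  have hcont6 : Continuous (fun s : ℝ => M - n + s - 1) :=
    (continuous_const.add continuous_id).sub continuous_const
  have hcont7 : Continuous (fun s : ℝ => n - s + 2) :=
    (continuous_const.sub continuous_id).add continuous_const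
  -- continuous replacements of the genBinom products
  set G1 : ℝ → ℝ := fun s => Real.Gamma M * Real.Gamma M *
      ((Real.Gamma (s + 1))⁻¹ * (Real.Gamma (M - s))⁻¹ *
        (Real.Gamma (n - s + 1))⁻¹ * (Real.Gamma (M - n + s))⁻¹) with hG1
  set G2 : ℝ → ℝ := fun s => Real.Gamma (M + 1) * Real.Gamma (M - 1) *
      ((Real.Gamma (s + 1))⁻¹ * (Real.Gamma (M - s + 1))⁻¹ *
        (Real.Gamma (n - s + 1))⁻¹ * (Real.Gamma (M - n + s - 1))⁻¹) with hG2
  have hG1c : Continuous G1 := by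
    apply continuous_const.mul
    exact (((invGamma_comp_continuous hcont1).mul
      (invGamma_comp_continuous hcont2)).mul
      (invGamma_comp_continuous hcont3)).mul
      (invGamma_comp_continuous hcont4)
  have hG2c : Continuous G2 := by
    apply continuous_const.mul
    exact (((invGamma_comp_continuous hcont1).mul
      (invGamma_comp_continuous hcont5)).mul
      (invGamma_comp_continuous hcont3)).mul
      (invGamma_comp_continuous hcont6)
  set D : ℝ → ℝ := fun s => G2 s - G1 s with hD
  have hDc : Continuous D := hG2c.sub hG1c
  have hDW : ∀ s, D s = Wb M n s := by
    intro s
    rw [hD]; unfold Wb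
    rw [F1_eq M n s, F2_eq M n s, hG1, hG2]
  have hDrc : Continuous (fun s => D (n + 1 - s)) :=
    hDc.comp (continuous_const.sub continuous_id)
  set KB : ℝ → ℝ := fun s => KK M n s * BB M n s with hKB
  have hKBc : Continuous KB := by
    apply Continuous.mul
    · apply continuous_const.mul
      exact (((invGamma_comp_continuous hcont1).mul
        (invGamma_comp_continuous hcont7)).mul
        (invGamma_comp_continuous hcont5)).mul
        (invGamma_comp_continuous hcont4)
    · unfold BB
      exact ((continuous_const.mul continuous_id).mul
        ((continuous_const.sub continuous_id))).sub continuous_const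
  -- reflection invariance with weight φ
  have hrefl : ∀ f : ℝ → ℝ, (∫ s in a..b, φ s * f (n + 1 - s))
      = ∫ s in a..b, φ s * f s := by
    intro f
    have step1 : (∫ s in a..b, φ s * f (n + 1 - s))
        = ∫ s in a..b, (fun t => φ t * f t) (n + 1 - s) := by
      apply intervalIntegral.integral_congr
      intro s _
      simp only
      rw [hφsym s]
    rw [step1, intervalIntegral.integral_comp_sub_left (fun t => φ t * f t) (n + 1),
      show n + 1 - b = a by linarith, show n + 1 - a = b by linarith]
  -- reflection invariance without weight
  have hrefl0 : ∀ f : ℝ → ℝ, (∫ s in a..b, f (n + 1 - s)) = ∫ s in a..b, f s := by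
    intro f
    rw [intervalIntegral.integral_comp_sub_left f (n + 1),
      show n + 1 - b = a by linarith, show n + 1 - a = b by linarith]
  -- key positivity
  have key : 0 ≤ ∫ s in a..b, φ s * D s := by
    -- symmetrized identity : ∫ φ D = ∫ φ KB
    have hsym : (∫ s in a..b, φ s * D s) = ∫ s in a..b, φ s * KB s := by
      have h1 : (∫ s in a..b, φ s * D s) + (∫ s in a..b, φ s * D (n + 1 - s))
          = ∫ s in a..b, (φ s * D s + φ s * D (n + 1 - s)) :=
        (intervalIntegral.integral_add (hIG D hDc) (hIG _ hDrc)).symm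
      have h2 : (∫ s in a..b, (φ s * D s + φ s * D (n + 1 - s)))
          = ∫ s in a..b, 2 * (φ s * KB s) := by
        apply intervalIntegral.integral_congr
        intro s _
        simp only
        rw [hKB]
        have := Wb_add_reflect hM n s
        rw [← hDW s, ← hDW (n + 1 - s)] at this
        calc φ s * D s + φ s * D (n + 1 - s) = φ s * (D s + D (n + 1 - s)) := by ring
          _ = φ s * (2 * (KK M n s * BB M n s)) := by rw [this]
          _ = 2 * (φ s * (KK M n s * BB M n s)) := by ring
      have h3 : (∫ s in a..b, 2 * (φ s * KB s)) = 2 * ∫ s in a..b, φ s * KB s :=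
        intervalIntegral.integral_const_mul 2 _
      have h4 := hrefl D
      linarith
    -- ∫ KB = ∫ D ≥ 0
    have hKB0 : 0 ≤ ∫ s in a..b, KB s := by
      have h1 : (∫ s in a..b, D s) + (∫ s in a..b, D (n + 1 - s))
          = ∫ s in a..b, (D s + D (n + 1 - s)) :=
        (intervalIntegral.integral_add (hDc.intervalIntegrable a b)
          (hDrc.intervalIntegrable a b)).symm
      have h2 : (∫ s in a..b, (D s + D (n + 1 - s))) = ∫ s in a..b, 2 * KB s := by
        apply intervalIntegral.integral_congr
        intro s _
        simp only
        rw [hKB]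
        have := Wb_add_reflect hM n s
        rw [← hDW s, ← hDW (n + 1 - s)] at this
        rw [this]
      have h3 : (∫ s in a..b, 2 * KB s) = 2 * ∫ s in a..b, KB s :=
        intervalIntegral.integral_const_mul 2 _
      have h4 := hrefl0 D
      have h5 : (∫ s in a..b, D s) = ∫ s in a..b, Wb M n s := by
        apply intervalIntegral.integral_congr
        intro s _
        exact hDW s
      have h6 := strip_ineq hM hn0 hn₂
      rw [← ha, ← hb] at h6
      linarith
    -- the crossing threshold
    set c : ℝ := (n + 1) / 2 with hc
    set P : ℝ := 2 * c * (M - c) with hP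
    set Rr : ℝ := 4 * M - 2 with hRr
    set ρ : ℝ := min (Real.sqrt (P / Rr)) (b - c) with hρ
    set θ : ℝ := φ (c + ρ) with hθ
    have hcb : c ≤ b := by rw [hc]; linarith
    have hac : a ≤ c := by rw [hc]; linarith
    have hcM : c < M := by rw [hc]; linarith
    have hc0 : 0 ≤ c := by rw [hc]; linarith
    have hP0 : 0 ≤ P := by rw [hP]; nlinarith
    have hRr0 : 0 < Rr := by rw [hRr]; linarith
    have hPR : 0 ≤ P / Rr := div_nonneg hP0 (le_of_lt hRr0)
    have hρ0 : 0 ≤ ρ := le_min (Real.sqrt_nonneg _) (by linarith)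
    have hρbc : ρ ≤ b - c := min_le_right _ _
    have hθ0 : 0 ≤ θ := hφ_nonneg _
    have hBBid : ∀ s, BB M n s = P - Rr * (s - c) ^ 2 := by
      intro s
      rw [hP, hRr, hc]; unfold BB; ring
    have hKKnn : ∀ s, s ∈ Icc a b → 0 ≤ KK M n s := by
      intro s hs
      obtain ⟨hs1, hs2⟩ := hs
      unfold KK
      have i1 : 0 ≤ (Real.Gamma (s + 1))⁻¹ := invGamma_nonneg (by linarith)
      have i2 : 0 ≤ (Real.Gamma (n - s + 2))⁻¹ := invGamma_nonneg (by linarith)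
      have i3 : 0 ≤ (Real.Gamma (M - s + 1))⁻¹ := invGamma_nonneg (by linarith)
      have i4 : 0 ≤ (Real.Gamma (M - n + s))⁻¹ := invGamma_nonneg (by linarith)
      have hΓM1 : 0 < Real.Gamma (M - 1) := Real.Gamma_pos_of_pos (by linarith)
      have hconst : 0 ≤ Real.Gamma (M - 1) * Real.Gamma (M - 1) * (M - 1) / 2 :=
        div_nonneg (by nlinarith) (by norm_num)
      exact mul_nonneg hconst
        (mul_nonneg (mul_nonneg (mul_nonneg i1 i2) i3) i4)
    have hφs_eq : ∀ s, φ (c + |s - c|) = φ s := by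
      intro s
      rcases abs_cases (s - c) with ⟨h1, _⟩ | ⟨h1, _⟩
      · rw [h1, show c + (s - c) = s by ring]
      · rw [h1, show c + -(s - c) = n + 1 - s by rw [hc]; ring, hφsym]
    have hmono : ∀ x y : ℝ, c ≤ x → x ≤ y → φ y ≤ φ x := by
      intro x y h1 h2
      rw [hc] at h1
      exact phi_mono hM hα_nonneg hα_logconcave hα_zero n h1 h2
    -- pointwise inequality
    have hpt : ∀ s, s ∈ Icc a b → 0 ≤ (φ s - θ) * KB s := by
      intro s hs
      have hsIcc := hs
      obtain ⟨hs1, hs2⟩ := hs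
      rcases le_or_gt (|s - c|) ρ with hle | hgt
      · -- inner region : both factors nonneg
        have hB : 0 ≤ BB M n s := by
          rw [hBBid s]
          have e1 : (s - c) ^ 2 ≤ ρ ^ 2 := by
            rw [← sq_abs (s - c)]
            exact pow_le_pow_left₀ (abs_nonneg _) hle 2
          have e2 : ρ ^ 2 ≤ P / Rr := by
            have h := pow_le_pow_left₀ hρ0 (min_le_left (Real.sqrt (P / Rr)) (b - c)) 2
            rwa [Real.sq_sqrt hPR] at h
          have e3 : Rr * (P / Rr) = P := by field_simp
          nlinarith
        have hφθ : θ ≤ φ s := by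
          rw [← hφs_eq s, hθ]
          exact hmono (c + |s - c|) (c + ρ) (by linarith [abs_nonneg (s - c)]) (by linarith)
        exact mul_nonneg (by linarith) (mul_nonneg (hKKnn s hsIcc) hB)
      · -- outer region : both factors nonpos
        have hsb : |s - c| ≤ b - c := by
          rcases abs_cases (s - c) with ⟨h1, _⟩ | ⟨h1, _⟩ <;> rw [h1] <;>
            [linarith; linarith]
        have hρ_eq : ρ = Real.sqrt (P / Rr) := by
          rcases min_cases (Real.sqrt (P / Rr)) (b - c) with ⟨h1, _⟩ | ⟨h1, h2⟩
          · rw [hρ, h1]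
          · exfalso; rw [hρ] at hgt; rw [h1] at hgt; linarith
        have hB : BB M n s ≤ 0 := by
          rw [hBBid s]
          have e1 : ρ ^ 2 < (s - c) ^ 2 := by
            rw [← sq_abs (s - c)]
            exact pow_lt_pow_left₀ hgt hρ0 (by norm_num)
          have e2 : ρ ^ 2 = P / Rr := by rw [hρ_eq, Real.sq_sqrt hPR]
          have e3 : Rr * (P / Rr) = P := by field_simp
          nlinarith
        have hφθ : φ s ≤ θ := by
          rw [← hφs_eq s, hθ]
          exact hmono (c + ρ) (c + |s - c|) (by linarith) (by linarith)
        have h1 : φ s - θ ≤ 0 := by linarith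
        have h2 : KB s ≤ 0 := mul_nonpos_of_nonneg_of_nonpos (hKKnn s hsIcc) hB
        have := mul_nonneg (neg_nonneg.mpr h1) (neg_nonneg.mpr h2)
        rwa [neg_mul_neg] at this
    -- assemble
    have hsplit : (∫ s in a..b, φ s * KB s)
        = (∫ s in a..b, (φ s - θ) * KB s) + θ * ∫ s in a..b, KB s := by
      have hi1 : IntervalIntegrable (fun s => (φ s - θ) * KB s) volume a b := by
        have e : (fun s => (φ s - θ) * KB s)
            = fun s => φ s * KB s - θ * KB s := by funext s; ring
        rw [e]
        exact (hIG KB hKBc).sub ((continuous_const.mul hKBc).intervalIntegrable a b)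
      have hi2 : IntervalIntegrable (fun s => θ * KB s) volume a b :=
        (continuous_const.mul hKBc).intervalIntegrable a b
      have h1 : (∫ s in a..b, ((φ s - θ) * KB s + θ * KB s))
          = (∫ s in a..b, (φ s - θ) * KB s) + ∫ s in a..b, θ * KB s :=
        intervalIntegral.integral_add hi1 hi2
      have h2 : (∫ s in a..b, φ s * KB s)
          = ∫ s in a..b, ((φ s - θ) * KB s + θ * KB s) := by
        apply intervalIntegral.integral_congr
        intro s _
        ring
      rw [h2, h1, intervalIntegral.integral_const_mul]
    rw [hsym, hsplit]
    have t1 : 0 ≤ ∫ s in a..b, (φ s - θ) * KB s :=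
      intervalIntegral.integral_nonneg (le_of_lt hab) hpt
    have t2 : 0 ≤ θ * ∫ s in a..b, KB s := mul_nonneg hθ0 hKB0
    linarith
  -- conclude
  have hfin : (∫ s in a..b, φ s * G2 s) - (∫ s in a..b, φ s * G1 s)
      = ∫ s in a..b, φ s * D s := by
    rw [← intervalIntegral.integral_sub (hIG G2 hG2c) (hIG G1 hG1c)]
    apply intervalIntegral.integral_congr
    intro s _
    simp only
    rw [hD]; ring
  have hL : (∫ s in a..b, α s * α (n - s + 1) * genBinom (M - 1) s * genBinom (M - 1) (n - s))
      = ∫ s in a..b, φ s * G1 s := by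
    apply intervalIntegral.integral_congr
    intro s _
    simp only [hφ, hG1, ← F1_eq M n s]
    ring
  have hR : (∫ s in a..b, α s * α (n - s + 1) * genBinom M s * genBinom (M - 2) (n - s))
      = ∫ s in a..b, φ s * G2 s := by
    apply intervalIntegral.integral_congr
    intro s _
    simp only [hφ, hG2, ← F2_eq M n s]
    ring
  rw [hL, hR]
  linarith
end

section
/- Let M be a positive integer and let α₀, α₁, …, α_M be a log-concave sequence of nonnegative reals, extended by αᵢ = 0 for i < 0 or i > M. Then for every integer n with 0 ≤ n ≤ 2M - 2, Σ_{i+j=n} (αᵢ - α_{i+1})·(αⱼ - α_{j+1})·(M-1 choose i)·(M-1 choose j) ≥ Σ_{i+j=n} αᵢ·(αⱼ - 2α_{j+1} + α_{j+2})·(M choose i)·(M-2 choose j), where the sums range over integer pairs (i, j) with i + j = n and the convention (M choose i) = 0 for i < 0 or i > M is used. -/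
/-- Binomial coefficient with integer arguments, zero by convention when the
lower index is negative or exceeds the upper index. -/
def binomZ (n k : ℤ) : ℕ :=
  if 0 ≤ k ∧ k ≤ n then n.toNat.choose k.toNat else 0

lemma binomZ_neg {n k : ℤ} (h : k < 0) : binomZ n k = 0 := by
  unfold binomZ; rw [if_neg]; omega

lemma binomZ_gt {n k : ℤ} (h : n < k) : binomZ n k = 0 := by
  unfold binomZ; rw [if_neg]; omega

lemma binomZ_pascal (m : ℤ) (hm : 0 ≤ m) (x : ℤ) :
    binomZ (m + 1) x = binomZ m x + binomZ m (x - 1) := by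
  unfold binomZ
  rcases lt_trichotomy x 0 with h | h | h
  · rw [if_neg (by omega), if_neg (by omega), if_neg (by omega)]
  · subst h
    rw [if_pos (by omega), if_pos (by omega), if_neg (by omega)]
    simp
  · rcases le_or_gt x m with h2 | h2
    · rw [if_pos (by omega), if_pos (by omega), if_pos (by omega)]
      have e1 : (m + 1).toNat = m.toNat + 1 := by omega
      have e2 : x.toNat = (x - 1).toNat + 1 := by omega
      rw [e1, e2, Nat.choose_succ_succ]
      exact add_comm _ _
    · rcases le_or_gt x (m + 1) with h3 | h3
      · rw [if_pos (by omega), if_neg (by omega), if_pos (by omega)]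
        have e1 : (m + 1).toNat = x.toNat := by omega
        have e2 : m.toNat = (x - 1).toNat := by omega
        rw [e1, e2, Nat.choose_self, Nat.choose_self]
      · rw [if_neg (by omega), if_neg (by omega), if_neg (by omega)]
  -- last case: x > m+1

lemma choose_logConcave {P a b : ℕ} (ha : 1 ≤ a) (hab : a ≤ b) (hb : b + 1 ≤ P) :
    P.choose (a - 1) * P.choose (b + 1) ≤ P.choose a * P.choose b := by
  have e1 : P.choose a * a = P.choose (a - 1) * (P - a + 1) := by
    have h := Nat.choose_succ_right_eq P (a - 1)
    rw [show a - 1 + 1 = a from by omega] at h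
    rw [h, show P - (a - 1) = P - a + 1 from by omega]
  have e2 : P.choose (b + 1) * (b + 1) = P.choose b * (P - b) := Nat.choose_succ_right_eq P b
  have key : a * (P - b) ≤ (P - a + 1) * (b + 1) := by
    calc a * (P - b) ≤ (b + 1) * (P - a + 1) := Nat.mul_le_mul (by omega) (by omega)
      _ = (P - a + 1) * (b + 1) := Nat.mul_comm _ _
  have pos : 0 < (P - a + 1) * (b + 1) := by positivity
  refine Nat.le_of_mul_le_mul_right ?_ pos
  calc P.choose (a - 1) * P.choose (b + 1) * ((P - a + 1) * (b + 1))
      = (P.choose (a - 1) * (P - a + 1)) * (P.choose (b + 1) * (b + 1)) := by ring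
    _ = (P.choose a * a) * (P.choose b * (P - b)) := by rw [← e1, e2]
    _ = (P.choose a * P.choose b) * (a * (P - b)) := by ring
    _ ≤ (P.choose a * P.choose b) * ((P - a + 1) * (b + 1)) := Nat.mul_le_mul_left _ key
    _ = P.choose a * P.choose b * ((P - a + 1) * (b + 1)) := by ring

lemma binomZ_logConcave (m x y : ℤ) (h : x ≤ y) :
    binomZ m (x - 1) * binomZ m (y + 1) ≤ binomZ m x * binomZ m y := by
  rcases le_or_gt x 0 with hx | hx
  · rw [binomZ_neg (by omega : x - 1 < 0)]; simp
  · rcases le_or_gt (y + 1) m with hy | hy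
    · have c1 : binomZ m x = m.toNat.choose x.toNat := if_pos (by omega)
      have c2 : binomZ m y = m.toNat.choose y.toNat := if_pos (by omega)
      have c3 : binomZ m (x - 1) = m.toNat.choose (x - 1).toNat := if_pos (by omega)
      have c4 : binomZ m (y + 1) = m.toNat.choose (y + 1).toNat := if_pos (by omega)
      rw [c1, c2, c3, c4, show (x - 1).toNat = x.toNat - 1 from by omega,
        show (y + 1).toNat = y.toNat + 1 from by omega]
      exact choose_logConcave (by omega) (by omega) (by omega)
    · rw [binomZ_gt (by omega : m < y + 1)]; simp

lemma sum_Icc_congr_supp (f : ℤ → ℝ) (lo hi a b a' b' : ℤ)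
    (hsupp : ∀ i, i < lo ∨ hi < i → f i = 0)
    (h1 : a ≤ lo) (h2 : hi ≤ b) (h3 : a' ≤ lo) (h4 : hi ≤ b') :
    ∑ i ∈ Finset.Icc a b, f i = ∑ i ∈ Finset.Icc a' b', f i := by
  have key : ∀ c d : ℤ, c ≤ lo → hi ≤ d →
      ∑ i ∈ Finset.Icc c d, f i = ∑ i ∈ Finset.Icc lo hi, f i := by
    intro c d hc hd
    refine (Finset.sum_subset (Finset.Icc_subset_Icc hc hd) ?_).symm
    intro x hx hnx
    apply hsupp
    simp only [Finset.mem_Icc] at hx hnx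
    omega
  rw [key a b h1 h2, key a' b' h3 h4]

lemma sum_Icc_translate (f : ℤ → ℝ) (a b e : ℤ) :
    ∑ i ∈ Finset.Icc a b, f (i - e) = ∑ i ∈ Finset.Icc (a - e) (b - e), f i := by
  refine Finset.sum_nbij' (fun i => i - e) (fun j => j + e) ?_ ?_ ?_ ?_ ?_ <;>
    intros <;> simp_all [Finset.mem_Icc] <;> omega

lemma sum_Icc_reflect (f : ℤ → ℝ) (a b c : ℤ) :
    ∑ i ∈ Finset.Icc a b, f (c - i) = ∑ i ∈ Finset.Icc (c - b) (c - a), f i := by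
  refine Finset.sum_nbij' (fun i => c - i) (fun j => c - j) ?_ ?_ ?_ ?_ ?_ <;>
    intros <;> simp_all [Finset.mem_Icc] <;> omega

lemma sum_shiftS (N : ℤ) (f : ℤ → ℝ) (e lo hi : ℤ)
    (hsupp : ∀ i, i < lo ∨ hi < i → f i = 0)
    (c1 : -5 - e ≤ lo) (c2 : hi ≤ N + 5 - e) (c3 : -5 ≤ lo) (c4 : hi ≤ N + 5) :
    ∑ i ∈ Finset.Icc (-5 : ℤ) (N + 5), f (i - e) = ∑ i ∈ Finset.Icc (-5 : ℤ) (N + 5), f i := by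
  rw [sum_Icc_translate]
  exact sum_Icc_congr_supp f lo hi _ _ _ _ hsupp c1 c2 c3 c4

lemma sum_reflectS (N : ℤ) (f : ℤ → ℝ) (c lo hi : ℤ)
    (hsupp : ∀ i, i < lo ∨ hi < i → f i = 0)
    (c1 : c - (N + 5) ≤ lo) (c2 : hi ≤ c + 5) (c3 : -5 ≤ lo) (c4 : hi ≤ N + 5) :
    ∑ i ∈ Finset.Icc (-5 : ℤ) (N + 5), f (c - i) = ∑ i ∈ Finset.Icc (-5 : ℤ) (N + 5), f i := by
  rw [sum_Icc_reflect]
  exact sum_Icc_congr_supp f lo hi _ _ _ _ hsupp c1 c2 c3 c4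

lemma supp_PP (P : ℤ → ℝ) (hP0 : ∀ x : ℤ, x < 0 → P x = 0) (W : ℤ) (h : ℤ → ℝ) :
    ∀ i : ℤ, i < 0 ∨ W < i → P i * P (W - i) * h i = 0 := by
  intro i hi
  rcases hi with hi | hi
  · rw [hP0 i hi]; ring
  · rw [hP0 (W - i) (by omega)]; ring


theorem mixture_sum_ineq_discrete
    (M : ℕ) (hM : 0 < M) (α : ℤ → ℝ)
    (hα_nonneg : ∀ i, 0 ≤ α i)
    (hα_zero : ∀ i : ℤ, i < 0 ∨ (M : ℤ) < i → α i = 0)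
    (hα_logconcave : ∀ i j : ℤ, 1 ≤ i → i ≤ j → j + 1 ≤ (M : ℤ) →
      α (i - 1) * α (j + 1) ≤ α i * α j)
    (n : ℕ) (hn : (n : ℤ) ≤ 2 * (M : ℤ) - 2) :
    (∑ i ∈ Finset.Icc (0 : ℤ) (n : ℤ),
        α i * (α ((n : ℤ) - i) - 2 * α ((n : ℤ) - i + 1) + α ((n : ℤ) - i + 2)) *
          (binomZ (M : ℤ) i : ℝ) * (binomZ ((M : ℤ) - 2) ((n : ℤ) - i) : ℝ)) ≤
      ∑ i ∈ Finset.Icc (0 : ℤ) (n : ℤ),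
        (α i - α (i + 1)) * (α ((n : ℤ) - i) - α ((n : ℤ) - i + 1)) *
          (binomZ ((M : ℤ) - 1) i : ℝ) * (binomZ ((M : ℤ) - 1) ((n : ℤ) - i) : ℝ) := by
  rcases Nat.lt_or_ge 1 M with hM2 | hM1
  case inr =>
    -- M = 1
    have hM1' : M = 1 := by omega
    subst hM1'
    have hn0 : n = 0 := by omega
    subst hn0
    simp only [Nat.cast_zero, Nat.cast_one, Finset.Icc_self, Finset.sum_singleton]
    norm_num [binomZ]
    nlinarith [sq_nonneg (α 0 - α 1), hα_nonneg 0, hα_nonneg 1]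
  case inl =>
    have hM2' : (2 : ℤ) ≤ (M : ℤ) := by exact_mod_cast hM2
    set N := (n : ℤ) with hNdef
    have hN0 : 0 ≤ N := Int.natCast_nonneg n
    set S := Finset.Icc (-5 : ℤ) (N + 5) with hSdef
    set P : ℤ → ℝ := fun x => ((binomZ ((M : ℤ) - 2) x : ℕ) : ℝ) with hPdef
    have hp : ∀ x : ℤ, ((binomZ ((M : ℤ) - 2) x : ℕ) : ℝ) = P x := fun x => rfl
    have hP0 : ∀ x : ℤ, x < 0 → P x = 0 := by
      intro x hx
      rw [hPdef]
      simp [binomZ_neg hx]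
    have hq : ∀ x : ℤ, ((binomZ ((M : ℤ) - 1) x : ℕ) : ℝ) = P x + P (x - 1) := by
      intro x
      rw [show (M : ℤ) - 1 = ((M : ℤ) - 2) + 1 from by ring, binomZ_pascal _ (by omega) x]
      push_cast
      rw [hp, hp]
    have hr : ∀ x : ℤ, ((binomZ (M : ℤ) x : ℕ) : ℝ) = P x + 2 * P (x - 1) + P (x - 2) := by
      intro x
      rw [show (M : ℤ) = ((M : ℤ) - 1) + 1 from by ring, binomZ_pascal _ (by omega) x]
      push_cast
      rw [hq, hq]
      ring
    have hPlc : ∀ x y : ℤ, x ≤ y → P (x - 1) * P (y + 1) ≤ P x * P y := by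
      intro x y h
      have hc : ((binomZ ((M : ℤ) - 2) (x - 1) * binomZ ((M : ℤ) - 2) (y + 1) : ℕ) : ℝ)
          ≤ ((binomZ ((M : ℤ) - 2) x * binomZ ((M : ℤ) - 2) y : ℕ) : ℝ) :=
        Nat.cast_le.mpr (binomZ_logConcave _ x y h)
      push_cast at hc
      simp only [hp] at hc
      exact hc
    have hαlc : ∀ x y : ℤ, x ≤ y → α (x - 1) * α (y + 1) ≤ α x * α y := by
      intro x y h
      rcases le_or_gt x 0 with hx | hx
      · rw [hα_zero (x - 1) (Or.inl (by omega)), zero_mul]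
        exact mul_nonneg (hα_nonneg x) (hα_nonneg y)
      · rcases le_or_gt (y + 1) (M : ℤ) with hy | hy
        · exact hα_logconcave x y (by omega) h hy
        · rw [hα_zero (y + 1) (Or.inr (by omega)), mul_zero]
          exact mul_nonneg (hα_nonneg x) (hα_nonneg y)
    have hpos : ∀ m : ℤ, N ≤ m → m ≤ N + 2 →
        0 ≤ ∑ i ∈ S, P i * P (m - 2 - i) * (α (i + 1) * α (m - 1 - i) - α (i + 2) * α (m - 2 - i)) := by
      intro m hm1 hm2
      have hrefl : (∑ i ∈ S, P (m - 3 - i) * P (m - 2 - (m - 3 - i)) * (α (m - 3 - i + 1) * α (m - 1 - (m - 3 - i)) - α (m - 3 - i + 2) * α (m - 2 - (m - 3 - i))))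
          = ∑ i ∈ S, P i * P (m - 2 - i) * (α (i + 1) * α (m - 1 - i) - α (i + 2) * α (m - 2 - i)) :=
        sum_reflectS N (fun j => P j * P (m - 2 - j) * (α (j + 1) * α (m - 1 - j) - α (j + 2) * α (m - 2 - j)))
          (m - 3) 0 (m - 2) (supp_PP P hP0 (m - 2) _) (by omega) (by omega) (by omega) (by omega)
      have key : ∀ i : ℤ, 0 ≤ P i * P (m - 2 - i) * (α (i + 1) * α (m - 1 - i) - α (i + 2) * α (m - 2 - i))
          + P (m - 3 - i) * P (m - 2 - (m - 3 - i)) * (α (m - 3 - i + 1) * α (m - 1 - (m - 3 - i)) - α (m - 3 - i + 2) * α (m - 2 - (m - 3 - i))) := by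
        intro i
        rw [show m - 2 - (m - 3 - i) = i + 1 from by ring, show m - 3 - i + 1 = m - 2 - i from by ring,
            show m - 1 - (m - 3 - i) = i + 2 from by ring, show m - 3 - i + 2 = m - 1 - i from by ring]
        rcases le_or_gt m (2 * i + 2) with hc | hc
        · have h1 := hPlc (m - 2 - i) i (by omega)
          rw [show m - 2 - i - 1 = m - 3 - i from by ring] at h1
          have h2 := hαlc (m - 1 - i) (i + 1) (by omega)
          rw [show m - 1 - i - 1 = m - 2 - i from by ring, show i + 1 + 1 = i + 2 from by ring] at h2
          nlinarith [mul_nonneg (sub_nonneg.mpr h1) (sub_nonneg.mpr h2)]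
        · rcases le_or_gt m (2 * i + 3) with hc2 | hc2
          · rw [show m - 2 - i = i + 1 from by omega, show m - 1 - i = i + 2 from by omega,
                show m - 3 - i = i from by omega]
            have h0 : P i * P (i + 1) * (α (i + 1) * α (i + 2) - α (i + 2) * α (i + 1))
                + P i * P (i + 1) * (α (i + 1) * α (i + 2) - α (i + 2) * α (i + 1)) = 0 := by ring
            linarith [h0]
          · have h1 := hPlc (i + 1) (m - 3 - i) (by omega)
            rw [show i + 1 - 1 = i from by ring, show m - 3 - i + 1 = m - 2 - i from by ring] at h1
            have h2 := hαlc (i + 2) (m - 2 - i) (by omega)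
            rw [show i + 2 - 1 = i + 1 from by ring, show m - 2 - i + 1 = m - 1 - i from by ring] at h2
            nlinarith [mul_nonneg (sub_nonneg.mpr h1) (sub_nonneg.mpr h2)]
      have h2 : 0 ≤ ∑ i ∈ S, (P i * P (m - 2 - i) * (α (i + 1) * α (m - 1 - i) - α (i + 2) * α (m - 2 - i))
          + P (m - 3 - i) * P (m - 2 - (m - 3 - i)) * (α (m - 3 - i + 1) * α (m - 1 - (m - 3 - i)) - α (m - 3 - i + 2) * α (m - 2 - (m - 3 - i)))) :=
        Finset.sum_nonneg fun i _ => key i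
      rw [Finset.sum_add_distrib, hrefl] at h2
      linarith
    have hLex : (∑ i ∈ Finset.Icc (0 : ℤ) N, α i * (α (N - i) - 2 * α (N - i + 1) + α (N - i + 2)) * (binomZ (M : ℤ) i : ℝ) * (binomZ ((M : ℤ) - 2) (N - i) : ℝ))
        = ∑ i ∈ S, α i * (α (N - i) - 2 * α (N - i + 1) + α (N - i + 2)) * (binomZ (M : ℤ) i : ℝ) * (binomZ ((M : ℤ) - 2) (N - i) : ℝ) := by
      refine sum_Icc_congr_supp _ 0 N 0 N (-5) (N + 5) ?_ (by omega) (by omega) (by omega) (by omega)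
      intro i hi
      rcases hi with h | h
      · rw [binomZ_neg h]
        push_cast
        ring
      · rw [binomZ_neg (show N - i < 0 from by omega)]
        push_cast
        ring
    have hRex : (∑ i ∈ Finset.Icc (0 : ℤ) N, (α i - α (i + 1)) * (α (N - i) - α (N - i + 1)) * (binomZ ((M : ℤ) - 1) i : ℝ) * (binomZ ((M : ℤ) - 1) (N - i) : ℝ))
        = ∑ i ∈ S, (α i - α (i + 1)) * (α (N - i) - α (N - i + 1)) * (binomZ ((M : ℤ) - 1) i : ℝ) * (binomZ ((M : ℤ) - 1) (N - i) : ℝ) := by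
      refine sum_Icc_congr_supp _ 0 N 0 N (-5) (N + 5) ?_ (by omega) (by omega) (by omega) (by omega)
      intro i hi
      rcases hi with h | h
      · rw [binomZ_neg h]
        push_cast
        ring
      · rw [binomZ_neg (show N - i < 0 from by omega)]
        push_cast
        ring
    rw [hLex, hRex]
    have hsub : (∑ i ∈ S, (((α i - α (i + 1)) * (α (N - i) - α (N - i + 1)) * (binomZ ((M : ℤ) - 1) i : ℝ) * (binomZ ((M : ℤ) - 1) (N - i) : ℝ)) - (α i * (α (N - i) - 2 * α (N - i + 1) + α (N - i + 2)) * (binomZ (M : ℤ) i : ℝ) * (binomZ ((M : ℤ) - 2) (N - i) : ℝ))))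
        = (∑ i ∈ S, (α i - α (i + 1)) * (α (N - i) - α (N - i + 1)) * (binomZ ((M : ℤ) - 1) i : ℝ) * (binomZ ((M : ℤ) - 1) (N - i) : ℝ)) - (∑ i ∈ S, α i * (α (N - i) - 2 * α (N - i + 1) + α (N - i + 2)) * (binomZ (M : ℤ) i : ℝ) * (binomZ ((M : ℤ) - 2) (N - i) : ℝ)) := Finset.sum_sub_distrib _ _
    have hsplit : (∑ i ∈ S, (((α i - α (i + 1)) * (α (N - i) - α (N - i + 1)) * (binomZ ((M : ℤ) - 1) i : ℝ) * (binomZ ((M : ℤ) - 1) (N - i) : ℝ)) - (α i * (α (N - i) - 2 * α (N - i + 1) + α (N - i + 2)) * (binomZ (M : ℤ) i : ℝ) * (binomZ ((M : ℤ) - 2) (N - i) : ℝ))))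
        = (∑ i ∈ S, P (i) * P (N - (i)) * (α (i) * α (N - (i))))
        - (∑ i ∈ S, P (N - i) * P (N - (N - i)) * (α (N - i + 1) * α (N - (N - i))))
        - (∑ i ∈ S, P (i) * P (N - (i)) * (α (i + 1) * α (N - (i))))
        + (∑ i ∈ S, P (i) * P (N - (i)) * (α (i + 1) * α (N + 1 - (i))))
        + (∑ i ∈ S, P (N - 1 - i) * P (N - 1 - (N - 1 - i)) * (α (N - 1 - i + 1) * α (N - 1 - (N - 1 - i))))
        - (∑ i ∈ S, P (N - 1 - i) * P (N - 1 - (N - 1 - i)) * (α (N - 1 - i + 2) * α (N - 1 - (N - 1 - i))))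
        - (∑ i ∈ S, P (i) * P (N - 1 - (i)) * (α (i + 1) * α (N - (i))))
        + (∑ i ∈ S, P (N - 1 - i) * P (N - 1 - (N - 1 - i)) * (α (N - 1 - i + 2) * α (N - (N - 1 - i))))
        + (∑ i ∈ S, P (i - 1) * P (N - 1 - (i - 1)) * (α (i - 1 + 1) * α (N - 1 - (i - 1))))
        - (∑ i ∈ S, P (i - 1) * P (N - 1 - (i - 1)) * (α (i - 1 + 1) * α (N - (i - 1))))
        - (∑ i ∈ S, P (i - 1) * P (N - 1 - (i - 1)) * (α (i - 1 + 2) * α (N - 1 - (i - 1))))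
        + (∑ i ∈ S, P (i - 1) * P (N - 1 - (i - 1)) * (α (i - 1 + 2) * α (N - (i - 1))))
        + (∑ i ∈ S, P (i - 1) * P (N - 2 - (i - 1)) * (α (i - 1 + 1) * α (N - 1 - (i - 1))))
        - (∑ i ∈ S, P (N - 1 - i) * P (N - 2 - (N - 1 - i)) * (α (N - 1 - i + 2) * α (N - 1 - (N - 1 - i))))
        - (∑ i ∈ S, P (i - 1) * P (N - 2 - (i - 1)) * (α (i - 1 + 2) * α (N - 1 - (i - 1))))
        + (∑ i ∈ S, P (i - 1) * P (N - 2 - (i - 1)) * (α (i - 1 + 2) * α (N - (i - 1))))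
        - (∑ i ∈ S, P (i) * P (N - (i)) * (α (i) * α (N - (i))))
        + (∑ i ∈ S, P (N - i) * P (N - (N - i)) * (α (N - i + 1) * α (N - (N - i))))
        + (∑ i ∈ S, P (N - i) * P (N - (N - i)) * (α (N - i + 1) * α (N - (N - i))))
        - (∑ i ∈ S, P (N - i) * P (N - (N - i)) * (α (N - i + 2) * α (N - (N - i))))
        - (∑ i ∈ S, P (i - 1) * P (N - 1 - (i - 1)) * (α (i - 1 + 1) * α (N - 1 - (i - 1))))
        - (∑ i ∈ S, P (i - 1) * P (N - 1 - (i - 1)) * (α (i - 1 + 1) * α (N - 1 - (i - 1))))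
        + (∑ i ∈ S, P (i - 1) * P (N - 1 - (i - 1)) * (α (i - 1 + 1) * α (N - (i - 1))))
        + (∑ i ∈ S, P (i - 1) * P (N - 1 - (i - 1)) * (α (i - 1 + 1) * α (N - (i - 1))))
        + (∑ i ∈ S, P (i - 1) * P (N - 1 - (i - 1)) * (α (i - 1 + 1) * α (N - (i - 1))))
        + (∑ i ∈ S, P (i - 1) * P (N - 1 - (i - 1)) * (α (i - 1 + 1) * α (N - (i - 1))))
        - (∑ i ∈ S, P (N - i) * P (N - 1 - (N - i)) * (α (N - i + 2) * α (N - (N - i))))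
        - (∑ i ∈ S, P (N - i) * P (N - 1 - (N - i)) * (α (N - i + 2) * α (N - (N - i))))
        - (∑ i ∈ S, P (i - 2) * P (N - 2 - (i - 2)) * (α (i - 2 + 2) * α (N - 2 - (i - 2))))
        + (∑ i ∈ S, P (i - 2) * P (N - 2 - (i - 2)) * (α (i - 2 + 2) * α (N - 1 - (i - 2))))
        + (∑ i ∈ S, P (i - 2) * P (N - 2 - (i - 2)) * (α (i - 2 + 2) * α (N - 1 - (i - 2))))
        - (∑ i ∈ S, P (i - 2) * P (N - 2 - (i - 2)) * (α (i - 2 + 2) * α (N - (i - 2)))) := by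
      simp only [← Finset.sum_sub_distrib, ← Finset.sum_add_distrib]
      refine Finset.sum_congr rfl fun i _ => ?_
      simp only [hq, hr, hp]
      ring_nf
    have hmv1 : (∑ i ∈ S, P (N - i) * P (N - (N - i)) * (α (N - i + 1) * α (N - (N - i)))) = (∑ i ∈ S, P (i) * P (N - (i)) * (α (i + 1) * α (N - (i)))) :=
      sum_reflectS N (fun j => P (j) * P (N - (j)) * (α (j + 1) * α (N - (j)))) (N) 0 (N) (supp_PP P hP0 (N) _) (by omega) (by omega) (by omega) (by omega)
    have hmv2 : (∑ i ∈ S, P (N - 1 - i) * P (N - 1 - (N - 1 - i)) * (α (N - 1 - i + 1) * α (N - 1 - (N - 1 - i)))) = (∑ i ∈ S, P (i) * P (N - 1 - (i)) * (α (i + 1) * α (N - 1 - (i)))) :=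
      sum_reflectS N (fun j => P (j) * P (N - 1 - (j)) * (α (j + 1) * α (N - 1 - (j)))) (N - 1) 0 (N - 1) (supp_PP P hP0 (N - 1) _) (by omega) (by omega) (by omega) (by omega)
    have hmv3 : (∑ i ∈ S, P (N - 1 - i) * P (N - 1 - (N - 1 - i)) * (α (N - 1 - i + 2) * α (N - 1 - (N - 1 - i)))) = (∑ i ∈ S, P (i) * P (N - 1 - (i)) * (α (i + 2) * α (N - 1 - (i)))) :=
      sum_reflectS N (fun j => P (j) * P (N - 1 - (j)) * (α (j + 2) * α (N - 1 - (j)))) (N - 1) 0 (N - 1) (supp_PP P hP0 (N - 1) _) (by omega) (by omega) (by omega) (by omega)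
    have hmv4 : (∑ i ∈ S, P (N - 1 - i) * P (N - 1 - (N - 1 - i)) * (α (N - 1 - i + 2) * α (N - (N - 1 - i)))) = (∑ i ∈ S, P (i) * P (N - 1 - (i)) * (α (i + 2) * α (N - (i)))) :=
      sum_reflectS N (fun j => P (j) * P (N - 1 - (j)) * (α (j + 2) * α (N - (j)))) (N - 1) 0 (N - 1) (supp_PP P hP0 (N - 1) _) (by omega) (by omega) (by omega) (by omega)
    have hmv5 : (∑ i ∈ S, P (i - 1) * P (N - 1 - (i - 1)) * (α (i - 1 + 1) * α (N - 1 - (i - 1)))) = (∑ i ∈ S, P (i) * P (N - 1 - (i)) * (α (i + 1) * α (N - 1 - (i)))) :=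
      sum_shiftS N (fun j => P (j) * P (N - 1 - (j)) * (α (j + 1) * α (N - 1 - (j)))) 1 0 (N - 1) (supp_PP P hP0 (N - 1) _) (by omega) (by omega) (by omega) (by omega)
    have hmv6 : (∑ i ∈ S, P (i - 1) * P (N - 1 - (i - 1)) * (α (i - 1 + 1) * α (N - (i - 1)))) = (∑ i ∈ S, P (i) * P (N - 1 - (i)) * (α (i + 1) * α (N - (i)))) :=
      sum_shiftS N (fun j => P (j) * P (N - 1 - (j)) * (α (j + 1) * α (N - (j)))) 1 0 (N - 1) (supp_PP P hP0 (N - 1) _) (by omega) (by omega) (by omega) (by omega)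
    have hmv7 : (∑ i ∈ S, P (i - 1) * P (N - 1 - (i - 1)) * (α (i - 1 + 2) * α (N - 1 - (i - 1)))) = (∑ i ∈ S, P (i) * P (N - 1 - (i)) * (α (i + 2) * α (N - 1 - (i)))) :=
      sum_shiftS N (fun j => P (j) * P (N - 1 - (j)) * (α (j + 2) * α (N - 1 - (j)))) 1 0 (N - 1) (supp_PP P hP0 (N - 1) _) (by omega) (by omega) (by omega) (by omega)
    have hmv8 : (∑ i ∈ S, P (i - 1) * P (N - 1 - (i - 1)) * (α (i - 1 + 2) * α (N - (i - 1)))) = (∑ i ∈ S, P (i) * P (N - 1 - (i)) * (α (i + 2) * α (N - (i)))) :=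
      sum_shiftS N (fun j => P (j) * P (N - 1 - (j)) * (α (j + 2) * α (N - (j)))) 1 0 (N - 1) (supp_PP P hP0 (N - 1) _) (by omega) (by omega) (by omega) (by omega)
    have hmv9 : (∑ i ∈ S, P (i - 1) * P (N - 2 - (i - 1)) * (α (i - 1 + 1) * α (N - 1 - (i - 1)))) = (∑ i ∈ S, P (i) * P (N - 2 - (i)) * (α (i + 1) * α (N - 1 - (i)))) :=
      sum_shiftS N (fun j => P (j) * P (N - 2 - (j)) * (α (j + 1) * α (N - 1 - (j)))) 1 0 (N - 2) (supp_PP P hP0 (N - 2) _) (by omega) (by omega) (by omega) (by omega)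
    have hmv10 : (∑ i ∈ S, P (N - 1 - i) * P (N - 2 - (N - 1 - i)) * (α (N - 1 - i + 2) * α (N - 1 - (N - 1 - i)))) = (∑ i ∈ S, P (i) * P (N - 2 - (i)) * (α (i + 2) * α (N - 1 - (i)))) :=
      sum_reflectS N (fun j => P (j) * P (N - 2 - (j)) * (α (j + 2) * α (N - 1 - (j)))) (N - 1) 0 (N - 2) (supp_PP P hP0 (N - 2) _) (by omega) (by omega) (by omega) (by omega)
    have hmv11 : (∑ i ∈ S, P (i - 1) * P (N - 2 - (i - 1)) * (α (i - 1 + 2) * α (N - 1 - (i - 1)))) = (∑ i ∈ S, P (i) * P (N - 2 - (i)) * (α (i + 2) * α (N - 1 - (i)))) :=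
      sum_shiftS N (fun j => P (j) * P (N - 2 - (j)) * (α (j + 2) * α (N - 1 - (j)))) 1 0 (N - 2) (supp_PP P hP0 (N - 2) _) (by omega) (by omega) (by omega) (by omega)
    have hmv12 : (∑ i ∈ S, P (i - 1) * P (N - 2 - (i - 1)) * (α (i - 1 + 2) * α (N - (i - 1)))) = (∑ i ∈ S, P (i) * P (N - 2 - (i)) * (α (i + 2) * α (N - (i)))) :=
      sum_shiftS N (fun j => P (j) * P (N - 2 - (j)) * (α (j + 2) * α (N - (j)))) 1 0 (N - 2) (supp_PP P hP0 (N - 2) _) (by omega) (by omega) (by omega) (by omega)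
    have hmv13 : (∑ i ∈ S, P (N - i) * P (N - (N - i)) * (α (N - i + 2) * α (N - (N - i)))) = (∑ i ∈ S, P (i) * P (N - (i)) * (α (i + 2) * α (N - (i)))) :=
      sum_reflectS N (fun j => P (j) * P (N - (j)) * (α (j + 2) * α (N - (j)))) (N) 0 (N) (supp_PP P hP0 (N) _) (by omega) (by omega) (by omega) (by omega)
    have hmv14 : (∑ i ∈ S, P (N - i) * P (N - 1 - (N - i)) * (α (N - i + 2) * α (N - (N - i)))) = (∑ i ∈ S, P (i) * P (N - 1 - (i)) * (α (i + 2) * α (N - (i)))) :=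
      sum_reflectS N (fun j => P (j) * P (N - 1 - (j)) * (α (j + 2) * α (N - (j)))) (N) 0 (N - 1) (supp_PP P hP0 (N - 1) _) (by omega) (by omega) (by omega) (by omega)
    have hmv15 : (∑ i ∈ S, P (i - 2) * P (N - 2 - (i - 2)) * (α (i - 2 + 2) * α (N - 2 - (i - 2)))) = (∑ i ∈ S, P (i) * P (N - 2 - (i)) * (α (i + 2) * α (N - 2 - (i)))) :=
      sum_shiftS N (fun j => P (j) * P (N - 2 - (j)) * (α (j + 2) * α (N - 2 - (j)))) 2 0 (N - 2) (supp_PP P hP0 (N - 2) _) (by omega) (by omega) (by omega) (by omega)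
    have hmv16 : (∑ i ∈ S, P (i - 2) * P (N - 2 - (i - 2)) * (α (i - 2 + 2) * α (N - 1 - (i - 2)))) = (∑ i ∈ S, P (i) * P (N - 2 - (i)) * (α (i + 2) * α (N - 1 - (i)))) :=
      sum_shiftS N (fun j => P (j) * P (N - 2 - (j)) * (α (j + 2) * α (N - 1 - (j)))) 2 0 (N - 2) (supp_PP P hP0 (N - 2) _) (by omega) (by omega) (by omega) (by omega)
    have hmv17 : (∑ i ∈ S, P (i - 2) * P (N - 2 - (i - 2)) * (α (i - 2 + 2) * α (N - (i - 2)))) = (∑ i ∈ S, P (i) * P (N - 2 - (i)) * (α (i + 2) * α (N - (i)))) :=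
      sum_shiftS N (fun j => P (j) * P (N - 2 - (j)) * (α (j + 2) * α (N - (j)))) 2 0 (N - 2) (supp_PP P hP0 (N - 2) _) (by omega) (by omega) (by omega) (by omega)
    have hfold1 : (∑ i ∈ S, P (i) * P (N - 2 - (i)) * (α (i + 1) * α (N - 1 - (i)))) - (∑ i ∈ S, P (i) * P (N - 2 - (i)) * (α (i + 2) * α (N - 2 - (i))))
        = ∑ i ∈ S, P i * P (N - 2 - i) * (α (i + 1) * α (N - 1 - i) - α (i + 2) * α (N - 2 - i)) := by
      rw [← Finset.sum_sub_distrib]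
      exact Finset.sum_congr rfl fun i _ => by ring
    have hfold2 : (∑ i ∈ S, P (i) * P (N - 1 - (i)) * (α (i + 1) * α (N - (i)))) - (∑ i ∈ S, P (i) * P (N - 1 - (i)) * (α (i + 2) * α (N - 1 - (i))))
        = ∑ i ∈ S, P i * P (N - 1 - i) * (α (i + 1) * α (N - i) - α (i + 2) * α (N - 1 - i)) := by
      rw [← Finset.sum_sub_distrib]
      exact Finset.sum_congr rfl fun i _ => by ring
    have hfold3 : (∑ i ∈ S, P (i) * P (N - (i)) * (α (i + 1) * α (N + 1 - (i)))) - (∑ i ∈ S, P (i) * P (N - (i)) * (α (i + 2) * α (N - (i))))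
        = ∑ i ∈ S, P i * P (N - i) * (α (i + 1) * α (N + 1 - i) - α (i + 2) * α (N - i)) := by
      rw [← Finset.sum_sub_distrib]
      exact Finset.sum_congr rfl fun i _ => by ring
    have hpos1 : 0 ≤ ∑ i ∈ S, P i * P (N - 2 - i) * (α (i + 1) * α (N - 1 - i) - α (i + 2) * α (N - 2 - i)) := hpos N (le_refl N) (by omega)
    have hraw2 : 0 ≤ ∑ i ∈ S, P i * P (N + 1 - 2 - i) * (α (i + 1) * α (N + 1 - 1 - i) - α (i + 2) * α (N + 1 - 2 - i)) := hpos (N + 1) (by omega) (by omega)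
    have hc2 : (∑ i ∈ S, P i * P (N + 1 - 2 - i) * (α (i + 1) * α (N + 1 - 1 - i) - α (i + 2) * α (N + 1 - 2 - i)))
        = ∑ i ∈ S, P i * P (N - 1 - i) * (α (i + 1) * α (N - i) - α (i + 2) * α (N - 1 - i)) :=
      Finset.sum_congr rfl fun i _ => by
        rw [show N + 1 - 2 - i = N - 1 - i from by ring, show N + 1 - 1 - i = N - i from by ring]
    have hraw3 : 0 ≤ ∑ i ∈ S, P i * P (N + 2 - 2 - i) * (α (i + 1) * α (N + 2 - 1 - i) - α (i + 2) * α (N + 2 - 2 - i)) := hpos (N + 2) (by omega) (by omega)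
    have hc3 : (∑ i ∈ S, P i * P (N + 2 - 2 - i) * (α (i + 1) * α (N + 2 - 1 - i) - α (i + 2) * α (N + 2 - 2 - i)))
        = ∑ i ∈ S, P i * P (N - i) * (α (i + 1) * α (N + 1 - i) - α (i + 2) * α (N - i)) :=
      Finset.sum_congr rfl fun i _ => by
        rw [show N + 2 - 2 - i = N - i from by ring, show N + 2 - 1 - i = N + 1 - i from by ring]
    linarith [hsub, hsplit, hfold1, hfold2, hfold3, hpos1, hraw2, hc2, hraw3, hc3, hmv1, hmv2, hmv3, hmv4, hmv5, hmv6, hmv7, hmv8, hmv9, hmv10, hmv11, hmv12, hmv13, hmv14, hmv15, hmv16, hmv17]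
end

section
/- Let M > 1 and n be real numbers, let q satisfy 0 < q ≤ min{n, 2M - n}, and set k = (n - q)/2, so that [k, n-k] ⊆ [0, M]. Then ∫_{k}^{n-k} [C(M-1, s)·C(M-2, n-s-1) − C(M-1, s-1)·C(M-2, n-s)] ds = ∫_{k-1}^{k} ((n - 2s - 1)/(M - 1))·C(M-1, s)·C(M-1, n-s-1) ds. -/
open Real MeasureTheory Set

lemma cont_inv_Gamma : Continuous fun x : ℝ => (Real.Gamma x)⁻¹ := by
  have h : ∀ x : ℝ, (Real.Gamma x)⁻¹ = ((Complex.Gamma (x : ℂ))⁻¹).re := by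
    intro x
    rw [Complex.Gamma_ofReal, ← Complex.ofReal_inv, Complex.ofReal_re]
  simp only [h]
  exact Complex.continuous_re.comp
    (Complex.differentiable_one_div_Gamma.continuous.comp Complex.continuous_ofReal)

lemma genBinom_eq (M s : ℝ) :
    genBinom M s = Real.Gamma (M + 1) * (Real.Gamma (s + 1))⁻¹ * (Real.Gamma (M - s + 1))⁻¹ := by
  rw [genBinom, div_eq_mul_inv, mul_inv, ← mul_assoc]

lemma cont_genBinom (M : ℝ) : Continuous fun s => genBinom M s := by
  simp only [genBinom_eq]
  exact (continuous_const.mul (cont_inv_Gamma.comp (continuous_id.add continuous_const))).mul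
    (cont_inv_Gamma.comp ((continuous_const.sub continuous_id).add continuous_const))

lemma genBinom_step (M t : ℝ) (hM : M - 1 ≠ 0) :
    genBinom (M - 2) t = genBinom (M - 1) t * (M - 1 - t) / (M - 1) := by
  have e1 : Real.Gamma (M - 1 + 1) = (M - 1) * Real.Gamma (M - 1) := Real.Gamma_add_one hM
  have e2 : M - 2 - t + 1 = M - 1 - t := by ring
  rcases eq_or_ne (M - 1 - t) 0 with h | h
  · rw [genBinom, genBinom, e2, h, Real.Gamma_zero]
    simp
  · have e3 : Real.Gamma (M - 1 - t + 1) = (M - 1 - t) * Real.Gamma (M - 1 - t) :=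
      Real.Gamma_add_one h
    rw [genBinom, genBinom, e1, e2, e3, show M - 2 + 1 = M - 1 by ring]
    generalize Real.Gamma (M - 1) = a
    generalize Real.Gamma (t + 1) = b
    generalize Real.Gamma (M - 1 - t) = c
    rcases eq_or_ne b 0 with hb | hb
    · simp [hb]
    rcases eq_or_ne c 0 with hc | hc
    · simp [hc]
    field_simp

theorem genBinom_integral_identity
    (M n q : ℝ) (hM : 1 < M) (hq₁ : 0 < q) (hq₂ : q ≤ min n (2 * M - n))
    (k : ℝ) (hk : k = (n - q) / 2) :
    Set.Icc k (n - k) ⊆ Set.Icc 0 M ∧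
    (∫ s in k..(n - k),
        (genBinom (M - 1) s * genBinom (M - 2) (n - s - 1) -
          genBinom (M - 1) (s - 1) * genBinom (M - 2) (n - s))) =
      ∫ s in (k - 1)..k,
        (n - 2 * s - 1) / (M - 1) * genBinom (M - 1) s * genBinom (M - 1) (n - s - 1) := by
  have hqn : q ≤ n := le_trans hq₂ (min_le_left _ _)
  have hqM : q ≤ 2 * M - n := le_trans hq₂ (min_le_right _ _)
  have hM1 : M - 1 ≠ 0 := by linarith
  constructor
  · exact Set.Icc_subset_Icc (by rw [hk]; linarith) (by rw [hk]; linarith)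
  -- the function P
  set P : ℝ → ℝ := fun s => genBinom (M - 1) s * genBinom (M - 2) (n - s - 1) with hP
  have hPc : Continuous P :=
    (cont_genBinom (M - 1)).mul ((cont_genBinom (M - 2)).comp
      (((continuous_const.sub continuous_id).sub continuous_const)))
  have hPi : ∀ a b : ℝ, IntervalIntegrable P volume a b := fun a b =>
    hPc.intervalIntegrable a b
  -- step 1: the LHS integrand is P s - P (s - 1)
  have step1 : (∫ s in k..(n - k),
      (genBinom (M - 1) s * genBinom (M - 2) (n - s - 1) -
        genBinom (M - 1) (s - 1) * genBinom (M - 2) (n - s))) =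
      (∫ s in k..(n - k), P s) - ∫ s in k..(n - k), P (s - 1) := by
    have hRc : Continuous fun s : ℝ => P (s - 1) :=
      hPc.comp (continuous_id.sub continuous_const)
    rw [← intervalIntegral.integral_sub (hPi _ _) (hRc.intervalIntegrable _ _)]
    apply intervalIntegral.integral_congr
    intro s _
    simp only [hP]
    ring_nf
  have step2 : (∫ s in k..(n - k), P (s - 1)) = ∫ s in (k - 1)..(n - k - 1), P s := by
    simpa using intervalIntegral.integral_comp_sub_right P 1
  -- adjacency
  have adj1 : (∫ s in (k - 1)..k, P s) + (∫ s in k..(n - k), P s)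
      = ∫ s in (k - 1)..(n - k), P s :=
    intervalIntegral.integral_add_adjacent_intervals (hPi _ _) (hPi _ _)
  have adj2 : (∫ s in (k - 1)..(n - k - 1), P s) + (∫ s in (n - k - 1)..(n - k), P s)
      = ∫ s in (k - 1)..(n - k), P s :=
    intervalIntegral.integral_add_adjacent_intervals (hPi _ _) (hPi _ _)
  -- reflection
  have refl1 : (∫ s in (k - 1)..k, P (n - 1 - s)) = ∫ s in (n - k - 1)..(n - k), P s := by
    rw [intervalIntegral.integral_comp_sub_left P (n - 1), show n - 1 - (k - 1) = n - k by ring,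
      show n - 1 - k = n - k - 1 by ring]
  -- pointwise identity on [k-1, k]
  have point : ∀ s : ℝ, P (n - 1 - s) - P s =
      (n - 2 * s - 1) / (M - 1) * genBinom (M - 1) s * genBinom (M - 1) (n - s - 1) := by
    intro s
    simp only [hP]
    rw [show n - (n - 1 - s) - 1 = s by ring,
      genBinom_step M s hM1, genBinom_step M (n - s - 1) hM1]
    field_simp
    ring
  have final : (∫ s in (k - 1)..k, (P (n - 1 - s) - P s)) =
      ∫ s in (k - 1)..k,
        (n - 2 * s - 1) / (M - 1) * genBinom (M - 1) s * genBinom (M - 1) (n - s - 1) := by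
    apply intervalIntegral.integral_congr
    intro s _
    exact point s
  have split : (∫ s in (k - 1)..k, (P (n - 1 - s) - P s)) =
      (∫ s in (k - 1)..k, P (n - 1 - s)) - ∫ s in (k - 1)..k, P s := by
    have hQc : Continuous fun s : ℝ => P (n - 1 - s) :=
      hPc.comp (continuous_const.sub continuous_id)
    exact intervalIntegral.integral_sub (hQc.intervalIntegrable _ _) (hPi _ _)
  rw [step1, step2, ← final, split, refl1]
  linarith [adj1, adj2]
end
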